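/- Characterization of Axiom C in modal pair semantics: for all partial valuations V_R and V_w, no instance φ → □φ of Axiom C (with φ ranging over □-free formulas, the instance evaluated at R as the Weak Kleene disjunction of eval V_R (¬φ) and the Boolean value of □φ) has value some false at R if and only if V_R ⊆ V_w; in particular, if V_R ⊆ V_w then for every □-free formula φ, eval V_R φ = some true implies that □φ is true at R. -/

import Mathlib

/-- Propositional formulas: atoms, negation, conjunction, disjunction. -/
inductive PForm : Type where
  | atom : ℕ → PForm
  | neg : PForm → PForm
  | and : PForm → PForm → PForm
  | or : PForm → PForm → PForm

/-- Weak Kleene negation. -/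
def wkNot : Option Bool → Option Bool
  | some b => some (!b)
  | none => none

/-- Weak Kleene conjunction: undefined whenever either argument is undefined. -/
def wkAnd : Option Bool → Option Bool → Option Bool
  | some a, some b => some (a && b)
  | _, _ => none

/-- Weak Kleene disjunction: undefined whenever either argument is undefined. -/
def wkOr : Option Bool → Option Bool → Option Bool
  | some a, some b => some (a || b)
  | _, _ => none

/-- Weak Kleene evaluation of a formula under a partial valuation. -/
def wkEval (v : ℕ → Option Bool) : PForm → Option Bool
  | .atom p => v p
  | .neg φ => wkNot (wkEval v φ)
  | .and φ ψ => wkAnd (wkEval v φ) (wkEval v ψ)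
  | .or φ ψ => wkOr (wkEval v φ) (wkEval v ψ)

/-- The (always defined) Boolean value of □φ at R in modal pair semantics:
□φ is true at R iff wkEval V_w φ = some true, and false otherwise. -/
def boxVal (Vw : ℕ → Option Bool) (φ : PForm) : Bool :=
  decide (wkEval Vw φ = some true)

/-- Characterization of Axiom C in modal pair semantics:
no instance φ → □φ (φ ranging over □-free formulas, evaluated at R as the Weak
Kleene disjunction of wkEval V_R (¬φ) and the Boolean value of □φ) has value
some false at R iff V_R ⊆ V_w; in particular, if V_R ⊆ V_w then every □-free
formula true at R has □φ true at R. -/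
theorem wk_axiomC_characterization (VR Vw : ℕ → Option Bool) :
    ((∀ φ : PForm, wkOr (wkEval VR (.neg φ)) (some (boxVal Vw φ)) ≠ some false) ↔
      (∀ (p : ℕ) (b : Bool), VR p = some b → Vw p = some b))
    ∧ ((∀ (p : ℕ) (b : Bool), VR p = some b → Vw p = some b) →
        ∀ φ : PForm, wkEval VR φ = some true → boxVal Vw φ = true) := by
  have mono : (∀ (p : ℕ) (b : Bool), VR p = some b → Vw p = some b) →
      ∀ φ (b : Bool), wkEval VR φ = some b → wkEval Vw φ = some b := by
    intro h φ
    induction φ with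
    | atom p => intro b hb; exact h p b hb
    | neg φ ih =>
      intro b hb
      simp only [wkEval, wkNot] at hb ⊢
      cases hR : wkEval VR φ with
      | none => rw [hR] at hb; simp [wkNot] at hb
      | some c =>
        rw [hR] at hb; simp [wkNot] at hb
        rw [ih c hR]; simp [wkNot, hb]
    | and φ ψ ih1 ih2 =>
      intro b hb
      simp only [wkEval] at hb ⊢
      cases h1 : wkEval VR φ with
      | none => rw [h1] at hb; simp [wkAnd] at hb
      | some c =>
        cases h2 : wkEval VR ψ with
        | none => rw [h1, h2] at hb; simp [wkAnd] at hb
        | some d =>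
          rw [h1, h2] at hb
          rw [ih1 c h1, ih2 d h2]; exact hb
    | or φ ψ ih1 ih2 =>
      intro b hb
      simp only [wkEval] at hb ⊢
      cases h1 : wkEval VR φ with
      | none => rw [h1] at hb; simp [wkOr] at hb
      | some c =>
        cases h2 : wkEval VR ψ with
        | none => rw [h1, h2] at hb; simp [wkOr] at hb
        | some d =>
          rw [h1, h2] at hb
          rw [ih1 c h1, ih2 d h2]; exact hb
  constructor
  · constructor
    · intro hax p b hb
      cases b with
      | true =>
        have := hax (.atom p)
        simp only [wkEval, wkNot, hb, boxVal] at this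
        by_contra hne
        have : decide (Vw p = some true) = false := by
          simpa using hne
        rename_i h1; exact h1 (by simp [wkOr, hne])
      | false =>
        have := hax (.neg (.atom p))
        simp only [wkEval, wkNot, hb, boxVal, wkEval] at this
        by_contra hne
        have hd : decide (wkEval Vw (PForm.neg (.atom p)) = some true) = false := by
          simp only [wkEval]; show decide (wkNot (Vw p) = some true) = false
          cases hw : Vw p with
          | none => simp [wkNot]
          | some c =>
            cases c with
            | true => simp [wkNot]
            | false => exact absurd hw hne
        simp only [wkEval, wkNot] at hd
        rw [hd] at this
        simp [wkOr] at this
    · intro h φ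
      intro hfalse
      cases hR : wkEval VR φ with
      | none => simp [wkEval, hR, wkNot, wkOr] at hfalse
      | some c =>
        cases c with
        | false => simp [wkEval, hR, wkNot, wkOr] at hfalse
        | true =>
          have := mono h φ true hR
          simp only [wkEval, hR, wkNot, wkOr, boxVal, this] at hfalse
          simp at hfalse
  · intro h φ hφ
    have := mono h φ true hφ
    simp [boxVal, this]
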